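/- Let $A \in \mathbb{C}^{m\times (n_3 n_2)}$ (columns indexed by pairs in $\{1,\dots,n_3\}\times\{1,\dots,n_2\}$), let $C \in \mathbb{C}^{m\times k}$ have full column rank with $C^+ := (C^* C)^{-1} C^*$, and let $W_2 \in \mathbb{C}^{n_2\times r_2}$, $W_3 \in \mathbb{C}^{n_3\times r_3}$ have orthonormal columns ($W_2^* W_2 = I_{r_2}$, $W_3^* W_3 = I_{r_3}$). Set $S_0 := C^+ A (W_3 \otimes W_2)$. Then for every $S \in \mathbb{C}^{k\times (r_3 r_2)}$: $\|A - C S_0 (W_3 \otimes W_2)^*\|_F \le \|A - C S (W_3 \otimes W_2)^*\|_F$. -/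

import Mathlib

open scoped BigOperators Kronecker
open Matrix

/-- Squared Frobenius norm of a complex matrix. -/
noncomputable def frobSq {m n : Type*} [Fintype m] [Fintype n] (M : Matrix m n ℂ) : ℝ :=
  ∑ i, ∑ j, ‖M i j‖ ^ 2

/-- Frobenius norm of a complex matrix. -/
noncomputable def frobNorm {m n : Type*} [Fintype m] [Fintype n] (M : Matrix m n ℂ) : ℝ :=
  Real.sqrt (frobSq M)

lemma frobSq_eq_re_trace {m n : Type*} [Fintype m] [Fintype n] (M : Matrix m n ℂ) :
    frobSq M = (Matrix.trace (Mᴴ * M)).re := by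
  have hz : ∀ z : ℂ, (star z * z).re = ‖z‖ ^ 2 := fun z => by
    rw [Complex.star_def, ← Complex.normSq_eq_conj_mul_self]
    simp [Complex.sq_norm]
  simp only [Matrix.trace, Matrix.diag, Matrix.mul_apply, Matrix.conjTranspose_apply,
    Complex.re_sum, hz]
  exact Finset.sum_comm

lemma frobSq_nonneg {m n : Type*} [Fintype m] [Fintype n] (M : Matrix m n ℂ) :
    0 ≤ frobSq M := by
  apply Finset.sum_nonneg; intros; apply Finset.sum_nonneg; intros; positivity

lemma conjTranspose_kron {l m p q : Type*} (A : Matrix l m ℂ) (B : Matrix p q ℂ) :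
    (A ⊗ₖ B)ᴴ = Aᴴ ⊗ₖ Bᴴ := by
  ext ⟨i, j⟩ ⟨a, b⟩
  simp [Matrix.conjTranspose_apply, Matrix.kroneckerMap_apply, mul_comm]

lemma frobSq_add_of_orth {m n : Type*} [Fintype m] [Fintype n]
    (X Y : Matrix m n ℂ) (h : Matrix.trace (Xᴴ * Y) = 0) :
    frobSq (X + Y) = frobSq X + frobSq Y := by
  have hYX : Matrix.trace (Yᴴ * X) = 0 := by
    have h2 : (Xᴴ * Y)ᴴ = Yᴴ * X := by simp [Matrix.conjTranspose_mul]
    calc Matrix.trace (Yᴴ * X) = Matrix.trace ((Xᴴ * Y)ᴴ) := by rw [h2]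
      _ = star (Matrix.trace (Xᴴ * Y)) := Matrix.trace_conjTranspose _
      _ = 0 := by rw [h]; simp
  simp only [frobSq_eq_re_trace]
  have h3 : (X + Y)ᴴ * (X + Y) = Xᴴ * X + Yᴴ * Y + (Xᴴ * Y + Yᴴ * X) := by
    simp [Matrix.conjTranspose_add, Matrix.add_mul, Matrix.mul_add]; abel
  rw [h3]
  simp [Matrix.trace_add, h, hYX]

/-- Optimality of the core tensor in the hybrid algorithm for an order-3 tensor
(via the mode-1 unfolding `A ∈ ℂ^{m × (n₃ n₂)}`): with `C` of full column rank,
`C⁺ = (C^*C)⁻¹C^*`, `W₂, W₃` with orthonormal columns and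
`S₀ = C⁺ A (W₃ ⊗ W₂)`, for every `S`,
`‖A - C S₀ (W₃ ⊗ W₂)^*‖_F ≤ ‖A - C S (W₃ ⊗ W₂)^*‖_F`. -/
theorem core_tensor_optimality_order3 {m k n2 n3 r2 r3 : ℕ}
    (A : Matrix (Fin m) (Fin n3 × Fin n2) ℂ)
    (C : Matrix (Fin m) (Fin k) ℂ) (hC : IsUnit (Cᴴ * C))
    (W2 : Matrix (Fin n2) (Fin r2) ℂ) (hW2 : W2ᴴ * W2 = 1)
    (W3 : Matrix (Fin n3) (Fin r3) ℂ) (hW3 : W3ᴴ * W3 = 1)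
    (S0 : Matrix (Fin k) (Fin r3 × Fin r2) ℂ)
    (hS0 : S0 = ((Cᴴ * C)⁻¹ * Cᴴ) * A * (W3 ⊗ₖ W2)) :
    ∀ S : Matrix (Fin k) (Fin r3 × Fin r2) ℂ,
      frobNorm (A - C * S0 * (W3 ⊗ₖ W2)ᴴ) ≤ frobNorm (A - C * S * (W3 ⊗ₖ W2)ᴴ) := by
  intro S
  set W : Matrix (Fin n3 × Fin n2) (Fin r3 × Fin r2) ℂ := W3 ⊗ₖ W2 with hWdef
  have hdet : IsUnit (Cᴴ * C).det := (Matrix.isUnit_iff_isUnit_det _).mp hC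
  have hWW : Wᴴ * W = 1 := by
    rw [hWdef, conjTranspose_kron, ← Matrix.mul_kronecker_mul, hW2, hW3,
      Matrix.one_kronecker_one]
  set D : Matrix (Fin k) (Fin r3 × Fin r2) ℂ := S0 - S with hDdef
  set X : Matrix (Fin m) (Fin n3 × Fin n2) ℂ := A - C * S0 * Wᴴ with hXdef
  set Y : Matrix (Fin m) (Fin n3 × Fin n2) ℂ := C * D * Wᴴ with hYdef
  have hdecomp : A - C * S * Wᴴ = X + Y := by
    rw [hXdef, hYdef, hDdef]
    simp only [Matrix.mul_sub, Matrix.sub_mul]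
    abel
  -- key: S0ᴴ * (Cᴴ * C) = Wᴴ * (Aᴴ * C)
  have hS0H : S0ᴴ * (Cᴴ * C) = Wᴴ * (Aᴴ * C) := by
    rw [hS0]
    simp only [Matrix.conjTranspose_mul, Matrix.conjTranspose_nonsing_inv,
      Matrix.conjTranspose_conjTranspose, Matrix.mul_assoc]
    rw [Matrix.nonsing_inv_mul _ hdet]
    simp [Matrix.mul_assoc]
  -- cross term vanishes
  have key : Matrix.trace (Xᴴ * Y) = 0 := by
    have hXY : Xᴴ * Y = Aᴴ * (C * (D * Wᴴ)) - W * (Wᴴ * (Aᴴ * (C * (D * Wᴴ)))) := by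
      rw [hXdef, hYdef]
      simp only [Matrix.conjTranspose_sub, Matrix.conjTranspose_mul,
        Matrix.conjTranspose_conjTranspose, Matrix.sub_mul, Matrix.mul_assoc]
      congr 2
      have h5 : S0ᴴ * (Cᴴ * C) * (D * Wᴴ) = Wᴴ * (Aᴴ * C) * (D * Wᴴ) := by rw [hS0H]
      simpa [Matrix.mul_assoc] using h5
    rw [hXY, Matrix.trace_sub]
    have h2 : (W * (Wᴴ * (Aᴴ * (C * (D * Wᴴ))))).trace = (Aᴴ * (C * (D * Wᴴ))).trace := by
      rw [← Matrix.mul_assoc, Matrix.trace_mul_comm (W * Wᴴ)]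
      have h4 : (Aᴴ * (C * (D * Wᴴ))) * (W * Wᴴ) = Aᴴ * (C * (D * Wᴴ)) := by
        calc (Aᴴ * (C * (D * Wᴴ))) * (W * Wᴴ)
            = Aᴴ * (C * (D * (Wᴴ * W * Wᴴ))) := by simp only [Matrix.mul_assoc]
          _ = Aᴴ * (C * (D * Wᴴ)) := by rw [hWW, Matrix.one_mul]
      rw [h4]
    rw [h2, sub_self]
  -- conclude
  have hsum := frobSq_add_of_orth X Y key
  rw [hdecomp]
  unfold frobNorm
  apply Real.sqrt_le_sqrt
  rw [hsum]
  linarith [frobSq_nonneg Y]
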